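/- arXiv:1705.01301 — 4 statements merged into one kernel-verified Lean document; each statement's English description precedes it below -/
import Mathlib

section
/- Let D be a Krull domain of Krull dimension strictly greater than 1. Then the Zariski space Zar(D) is not a Noetherian topological space. -/
set_option linter.unusedSectionVars false


/-- The Zariski topology on the set of valuation subrings of a field `K`. -/
instance zariskiTopology (K : Type*) [Field K] : TopologicalSpace (ValuationSubring K) :=
  TopologicalSpace.generateFrom {U | ∃ x : K, U = {V : ValuationSubring K | x ∈ V}}

/-- The Zariski space `Zar(D)`: valuation subrings of `K` containing the image of `D`. -/
def zarSet (D K : Type*) [CommRing D] [Field K] [Algebra D K] : Set (ValuationSubring K) :=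
  {V | ∀ d : D, algebraMap D K d ∈ V}


/-- The localization `D_P` of `D` at a prime `P`, viewed as a subalgebra of the
fraction field `K` (with the primality assumption given explicitly). -/
noncomputable def locAt (D K : Type*) [CommRing D] [IsDomain D] [Field K] [Algebra D K]
    [IsFractionRing D K] (P : Ideal D) (hP : P.IsPrime) : Subalgebra D K :=
  Localization.subalgebra K (@Ideal.primeCompl D _ P hP)
    (@Ideal.primeCompl_le_nonZeroDivisors D _ _ P hP)

/-- `P` is a height-one prime of `D`. -/
def IsHeightOnePrime {D : Type*} [CommRing D] (P : Ideal D) : Prop :=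
  P.IsPrime ∧ P ≠ ⊥ ∧ ∀ Q : Ideal D, Q.IsPrime → Q < P → Q = ⊥

/-- `D` is a Krull domain: all localizations at height-one primes are discrete valuation
rings, `D` is the intersection of these localizations inside its fraction field `K`, and
every nonzero element lies in only finitely many height-one primes. -/
def IsKrullDomain (D K : Type*) [CommRing D] [IsDomain D] [Field K] [Algebra D K]
    [IsFractionRing D K] : Prop :=
  (∀ (P : Ideal D) (hP : IsHeightOnePrime P), IsDiscreteValuationRing (locAt D K P hP.1)) ∧
  (∀ x : K, (∀ (P : Ideal D) (hP : IsHeightOnePrime P), x ∈ locAt D K P hP.1) →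
    ∃ d : D, x = algebraMap D K d) ∧
  (∀ d : D, d ≠ 0 → {P : Ideal D | IsHeightOnePrime P ∧ d ∈ P}.Finite)

section Aux

open scoped nonZeroDivisors

variable {D K : Type*} [CommRing D] [IsDomain D] [Field K] [Algebra D K] [IsFractionRing D K]

theorem eK_ne_zero {d : D} (hd : d ≠ 0) : algebraMap D K d ≠ 0 := by
  simpa using (map_ne_zero_iff _ (IsFractionRing.injective D K)).mpr hd

theorem locAt_mem_iff {P : Ideal D} (hP : P.IsPrime) {x : K} :
    x ∈ locAt D K P hP ↔ ∃ a s : D, s ∉ P ∧ x * algebraMap D K s = algebraMap D K a := by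
  have h : x ∈ locAt D K P hP ↔ ∃ (a s : D) (hs : s ∈ P.primeCompl),
      x = IsLocalization.mk' K a
        (⟨s, Ideal.primeCompl_le_nonZeroDivisors P hs⟩ : D⁰) := Iff.rfl
  rw [h]
  constructor
  · rintro ⟨a, s, hs, rfl⟩
    exact ⟨a, s, hs, IsLocalization.mk'_spec _ _ _⟩
  · rintro ⟨a, s, hs, hx⟩
    exact ⟨a, s, hs, IsLocalization.eq_mk'_iff_mul_eq.mpr hx⟩

theorem not_isUnit_locAt {P : Ideal D} (hP : P.IsPrime) {s : D} (hs : s ∈ P) :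
    ¬ IsUnit (algebraMap D (locAt D K P hP) s) := by
  intro h
  obtain ⟨y, hy⟩ := isUnit_iff_exists_inv.mp h
  have hyK : algebraMap D K s * (y : K) = 1 := by
    have := congrArg (Subtype.val) hy
    simpa using this
  obtain ⟨a, s', hs', hrep⟩ := (locAt_mem_iff hP).mp y.2
  have : algebraMap D K s' = algebraMap D K (s * a) := by
    calc algebraMap D K s' = (algebraMap D K s * (y : K)) * algebraMap D K s' := by
          rw [hyK, one_mul]
      _ = algebraMap D K s * ((y : K) * algebraMap D K s') := by ring
      _ = algebraMap D K s * algebraMap D K a := by rw [hrep]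
      _ = algebraMap D K (s * a) := by rw [map_mul]
  have hss : s' = s * a := IsFractionRing.injective D K this
  exact hs' (hss ▸ P.mul_mem_right a hs)

theorem dvr_dvd_pow {R : Type*} [CommRing R] [IsDomain R] [IsDiscreteValuationRing R]
    {a b : R} (ha : a ≠ 0) (hb : ¬ IsUnit b) (hb0 : b ≠ 0) : ∃ n : ℕ, a ∣ b ^ n := by
  obtain ⟨π, hπ⟩ := IsDiscreteValuationRing.exists_irreducible R
  obtain ⟨m, hm⟩ := IsDiscreteValuationRing.associated_pow_irreducible ha hπ
  obtain ⟨k, hk⟩ := IsDiscreteValuationRing.associated_pow_irreducible hb0 hπ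
  have hk1 : 1 ≤ k := by
    rcases Nat.eq_zero_or_pos k with h0 | h
    · exfalso
      rw [h0, pow_zero] at hk
      exact hb (associated_one_iff_isUnit.mp hk)
    · exact h
  refine ⟨m, dvd_trans hm.dvd ?_⟩
  have hπb : π ∣ b := dvd_trans (dvd_pow_self π (Nat.one_le_iff_ne_zero.mp hk1)) hk.symm.dvd
  exact pow_dvd_pow_of_dvd hπb m

theorem mem_locAt_of_dvd {P : Ideal D} (hP : P.IsPrime) {s d : D}
    (h : algebraMap D (locAt D K P hP) s ∣ algebraMap D (locAt D K P hP) d) (hs : s ≠ 0) :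
    algebraMap D K d * (algebraMap D K s)⁻¹ ∈ locAt D K P hP := by
  obtain ⟨c, hc⟩ := h
  have hcK : algebraMap D K d = algebraMap D K s * (c : K) := by
    have := congrArg (Subtype.val) hc
    simpa using this
  rw [hcK, mul_comm (algebraMap D K s) (c : K), mul_assoc,
    mul_inv_cancel₀ (eK_ne_zero hs), mul_one]
  exact c.2

/-- Every nonzero element of a prime ideal `Q` of a Krull domain lies in a
height-one prime contained in `Q`. -/
theorem exists_heightOne_le (hKrull : IsKrullDomain D K) {Q : Ideal D} (hQ : Q.IsPrime)
    {s : D} (hsQ : s ∈ Q) (hs0 : s ≠ 0) :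
    ∃ P : Ideal D, IsHeightOnePrime P ∧ P ≤ Q ∧ s ∈ P := by
  by_contra hcon
  push_neg at hcon
  have hF : {P : Ideal D | IsHeightOnePrime P ∧ s ∈ P}.Finite := hKrull.2.2 s hs0
  classical
  set Fs : Finset (Ideal D) := hF.toFinset with hFs
  have hmemFs : ∀ P : Ideal D, P ∈ Fs ↔ IsHeightOnePrime P ∧ s ∈ P := by
    intro P; rw [hFs, Set.Finite.mem_toFinset]; rfl
  -- choose elements of each P not in Q
  have hex : ∀ P ∈ Fs, ∃ y : D, y ∈ P ∧ y ∉ Q := by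
    intro P hP
    obtain ⟨h1, h2⟩ := (hmemFs P).mp hP
    have hnle : ¬ P ≤ Q := fun hle => hcon P h1 hle h2
    exact SetLike.not_le_iff_exists.mp hnle
  choose f hf1 hf2 using hex
  set d : D := ∏ x ∈ Fs.attach, f x.1 x.2 with hd
  have hdQ : d ∉ Q := by
    intro hdQ
    obtain ⟨x, _, hx⟩ := (Ideal.IsPrime.prod_mem_iff (hp := hQ)).mp hdQ
    exact hf2 x.1 x.2 hx
  -- for each P ∈ Fs, find power
  have hpow : ∀ x : {P // P ∈ Fs}, ∃ n : ℕ,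
      algebraMap D (locAt D K x.1 ((hmemFs x.1).mp x.2).1.1) s ∣
        algebraMap D (locAt D K x.1 ((hmemFs x.1).mp x.2).1.1) d ^ n := by
    intro x
    obtain ⟨hht, hsP⟩ := (hmemFs x.1).mp x.2
    haveI : IsDiscreteValuationRing (locAt D K x.1 hht.1) := hKrull.1 x.1 hht
    have hsne : algebraMap D (locAt D K x.1 hht.1) s ≠ 0 := by
      intro h
      have : algebraMap D K s = 0 := by
        have := congrArg (Subtype.val) h
        simpa using this
      exact eK_ne_zero hs0 this
    have hfP : f x.1 x.2 ∈ x.1 := hf1 x.1 x.2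
    have hfne : f x.1 x.2 ≠ 0 := by
      intro h0
      exact hf2 x.1 x.2 (h0 ▸ Q.zero_mem)
    have hnonunit := not_isUnit_locAt (K := K) hht.1 hfP
    have hfne' : algebraMap D (locAt D K x.1 hht.1) (f x.1 x.2) ≠ 0 := by
      intro h
      have : algebraMap D K (f x.1 x.2) = 0 := by
        have := congrArg (Subtype.val) h
        simpa using this
      exact eK_ne_zero hfne this
    obtain ⟨n, hn⟩ := dvr_dvd_pow hsne hnonunit hfne'
    refine ⟨n, dvd_trans hn ?_⟩
    have : f x.1 x.2 ∣ d := Finset.dvd_prod_of_mem _ (Finset.mem_attach _ x)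
    rw [← map_pow, ← map_pow]
    exact map_dvd _ (pow_dvd_pow_of_dvd this n)
  choose nn hnn using hpow
  set M : ℕ := Finset.sup Fs.attach nn with hM
  -- the element x lies in all localizations at height one primes
  set x : K := algebraMap D K (d ^ M) * (algebraMap D K s)⁻¹ with hx
  have hxmem : ∀ (P : Ideal D) (hP : IsHeightOnePrime P), x ∈ locAt D K P hP.1 := by
    intro P hP
    by_cases hsP : s ∈ P
    · have hPF : P ∈ Fs := (hmemFs P).mpr ⟨hP, hsP⟩
      have hdvd : algebraMap D (locAt D K P hP.1) s ∣
          algebraMap D (locAt D K P hP.1) (d ^ M) := by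
        have h1 := hnn ⟨P, hPF⟩
        have hle : nn ⟨P, hPF⟩ ≤ M := Finset.le_sup (Finset.mem_attach _ _)
        have h2 : algebraMap D (locAt D K P ((hmemFs P).mp hPF).1.1) d ^ nn ⟨P, hPF⟩ ∣
            algebraMap D (locAt D K P ((hmemFs P).mp hPF).1.1) d ^ M := pow_dvd_pow _ hle
        have h3 := dvd_trans h1 h2
        rw [← map_pow] at h3
        exact h3
      exact mem_locAt_of_dvd hP.1 hdvd hs0
    · rw [locAt_mem_iff hP.1]
      refine ⟨d ^ M, s, hsP, ?_⟩
      rw [hx, mul_assoc, inv_mul_cancel₀ (eK_ne_zero hs0), mul_one]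
  obtain ⟨w, hw⟩ := hKrull.2.1 x hxmem
  have hws : algebraMap D K (w * s) = algebraMap D K (d ^ M) := by
    rw [map_mul, ← hw, hx, mul_assoc, inv_mul_cancel₀ (eK_ne_zero hs0), mul_one]
  have : w * s = d ^ M := IsFractionRing.injective D K hws
  have hdM : d ^ M ∈ Q := this ▸ Q.mul_mem_left w hsQ
  exact hdQ (hQ.mem_of_pow_mem M hdM)

/-- Representation of elements of `D[u, u⁻¹]`, `u = q^(n+1)/t`, together with their
"residues" at a height-one prime `P'` containing `t - q^(n+1)`. -/
theorem adjoin_rep {q t : D} {P' : Ideal D} (hP' : P'.IsPrime) (n : ℕ)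
    (hq0 : q ≠ 0) (ht0 : t ≠ 0) (hsub : t - q ^ (n + 1) ∈ P')
    {x : K} (hx : x ∈ Algebra.adjoin D
      ({(algebraMap D K q) ^ (n + 1) * (algebraMap D K t)⁻¹,
        ((algebraMap D K q) ^ (n + 1) * (algebraMap D K t)⁻¹)⁻¹} : Set K)) :
    ∃ (a b : ℕ) (w z : D),
      x * (algebraMap D K q) ^ a * (algebraMap D K t) ^ b = algebraMap D K w ∧
      Ideal.Quotient.mk P' w = Ideal.Quotient.mk P' (q ^ (a + (n + 1) * b) * z) := by
  have hqK : algebraMap D K q ≠ 0 := eK_ne_zero hq0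
  have htK : algebraMap D K t ≠ 0 := eK_ne_zero ht0
  have hTQ : Ideal.Quotient.mk P' t = Ideal.Quotient.mk P' q ^ (n + 1) := by
    rw [← map_pow]; exact Ideal.Quotient.eq.mpr hsub
  induction hx using Algebra.adjoin_induction with
  | mem x hx =>
    rcases hx with hx | hx
    · -- x = u
      refine ⟨0, 1, q ^ (n + 1), 1, ?_, ?_⟩
      · rw [hx]
        rw [pow_zero, mul_one, pow_one, mul_assoc, inv_mul_cancel₀ htK, mul_one, map_pow]
      · simp only [map_mul, map_pow, map_one, mul_one]
        ring
    · -- x = u⁻¹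
      simp only [Set.mem_singleton_iff] at hx
      refine ⟨n + 1, 0, t, 1, ?_, ?_⟩
      · rw [hx, pow_zero, mul_one, mul_inv, inv_inv]
        rw [mul_comm ((algebraMap D K q) ^ (n+1))⁻¹ (algebraMap D K t), mul_assoc,
          inv_mul_cancel₀ (pow_ne_zero _ hqK), mul_one]
      · simp only [map_mul, map_pow, map_one, mul_one]
        rw [hTQ]
        ring
  | algebraMap r =>
    refine ⟨0, 0, r, r, by simp, by simp⟩
  | add x y hx hy ihx ihy =>
    obtain ⟨a1, b1, w1, z1, e1, m1⟩ := ihx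
    obtain ⟨a2, b2, w2, z2, e2, m2⟩ := ihy
    refine ⟨a1 + a2, b1 + b2, w1 * (q ^ a2 * t ^ b2) + w2 * (q ^ a1 * t ^ b1), z1 + z2, ?_, ?_⟩
    · have key : (x + y) * (algebraMap D K q) ^ (a1 + a2) * (algebraMap D K t) ^ (b1 + b2)
          = (x * (algebraMap D K q) ^ a1 * (algebraMap D K t) ^ b1) *
              ((algebraMap D K q) ^ a2 * (algebraMap D K t) ^ b2)
            + (y * (algebraMap D K q) ^ a2 * (algebraMap D K t) ^ b2) *
              ((algebraMap D K q) ^ a1 * (algebraMap D K t) ^ b1) := by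
        rw [pow_add, pow_add]; ring
      rw [key, e1, e2]
      simp only [map_add, map_mul, map_pow]
    · simp only [map_add, map_mul, map_pow] at m1 m2 ⊢
      rw [m1, m2, hTQ]
      ring
  | mul x y hx hy ihx ihy =>
    obtain ⟨a1, b1, w1, z1, e1, m1⟩ := ihx
    obtain ⟨a2, b2, w2, z2, e2, m2⟩ := ihy
    refine ⟨a1 + a2, b1 + b2, w1 * w2, z1 * z2, ?_, ?_⟩
    · have key : (x * y) * (algebraMap D K q) ^ (a1 + a2) * (algebraMap D K t) ^ (b1 + b2)
          = (x * (algebraMap D K q) ^ a1 * (algebraMap D K t) ^ b1) *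
            (y * (algebraMap D K q) ^ a2 * (algebraMap D K t) ^ b2) := by
        rw [pow_add, pow_add]; ring
      rw [key, e1, e2, map_mul]
    · simp only [map_mul, map_pow] at m1 m2 ⊢
      rw [m1, m2]
      ring

/-- The key witness: for each `n` there is a valuation subring of `K` containing `D`
and `q^(n+1)/t` but omitting `q^i/t` for `1 ≤ i ≤ n`. -/
theorem exists_witness (hKrull : IsKrullDomain D K) {p Q : Ideal D}
    (hp : p.IsPrime) (hQ : Q.IsPrime) (hpQ : p < Q) (q t : D)
    (hqp : q ∈ p) (hq0 : q ≠ 0) (htQ : t ∈ Q) (htp : t ∉ p)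
    (htF : ∀ P : Ideal D, IsHeightOnePrime P → q ∈ P → t ∉ P) (n : ℕ) :
    ∃ V : ValuationSubring K, (∀ d : D, algebraMap D K d ∈ V) ∧
      ((algebraMap D K q) ^ (n + 1) * (algebraMap D K t)⁻¹ ∈ V) ∧
      ∀ i : ℕ, 1 ≤ i → i ≤ n → (algebraMap D K q) ^ i * (algebraMap D K t)⁻¹ ∉ V := by
  classical
  have hqK : algebraMap D K q ≠ 0 := eK_ne_zero hq0
  have ht0 : t ≠ 0 := fun h => htp (h ▸ p.zero_mem)
  have htK : algebraMap D K t ≠ 0 := eK_ne_zero ht0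
  set s : D := t - q ^ (n + 1) with hs
  have hsQ : s ∈ Q := Q.sub_mem htQ (Q.pow_mem_of_mem (hpQ.le hqp) _ (Nat.succ_pos n))
  have hs0 : s ≠ 0 := by
    intro h
    apply htp
    have : t = q ^ (n + 1) := by rwa [hs, sub_eq_zero] at h
    rw [this]
    exact p.pow_mem_of_mem hqp _ (Nat.succ_pos n)
  obtain ⟨P', hP'ht, hP'Q, hsP'⟩ := exists_heightOne_le hKrull hQ hsQ hs0
  have hP' : P'.IsPrime := hP'ht.1
  have hqP' : q ∉ P' := by
    intro hqP'
    have htP' : t ∈ P' := by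
      have : t = s + q ^ (n + 1) := by rw [hs]; ring
      rw [this]
      exact P'.add_mem hsP' (P'.pow_mem_of_mem hqP' _ (Nat.succ_pos n))
    exact htF P' hP'ht hqP' htP'
  set u : K := (algebraMap D K q) ^ (n + 1) * (algebraMap D K t)⁻¹ with hu
  have hu0 : u ≠ 0 := by
    rw [hu]
    exact mul_ne_zero (pow_ne_zero _ hqK) (inv_ne_zero htK)
  set S : Subalgebra D K := Algebra.adjoin D ({u, u⁻¹} : Set K) with hS
  -- (e q)⁻¹ is not in S
  have hqinvS : (algebraMap D K q)⁻¹ ∉ S := by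
    intro hmem
    obtain ⟨a, b, w, z, heq, hmk⟩ := adjoin_rep hP' n hq0 ht0 (by rwa [← hs]) hmem
    have hDeq : q ^ a * t ^ b = w * q := by
      apply IsFractionRing.injective D K
      rw [map_mul, map_mul, map_pow, map_pow]
      calc (algebraMap D K q) ^ a * (algebraMap D K t) ^ b
          = ((algebraMap D K q)⁻¹ * (algebraMap D K q) ^ a * (algebraMap D K t) ^ b)
            * algebraMap D K q := by
            field_simp
        _ = algebraMap D K w * algebraMap D K q := by rw [heq]
    have hTQ : Ideal.Quotient.mk P' t = Ideal.Quotient.mk P' q ^ (n + 1) := by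
      rw [← map_pow]
      exact Ideal.Quotient.eq.mpr (by rwa [← hs])
    have hmkeq := congrArg (Ideal.Quotient.mk P') hDeq
    rw [map_mul, map_mul, map_pow, map_pow, hTQ, hmk] at hmkeq
    -- now : mkq ^ a * (mkq ^ (n+1)) ^ b = mkq ^ (a + (n+1) * b) * mk z * mk q
    have hfactor : (Ideal.Quotient.mk P' q) ^ (a + (n + 1) * b) *
        (1 - Ideal.Quotient.mk P' z * Ideal.Quotient.mk P' q) = 0 := by
      rw [map_mul, map_pow] at hmkeq
      calc (Ideal.Quotient.mk P' q) ^ (a + (n + 1) * b) *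
            (1 - Ideal.Quotient.mk P' z * Ideal.Quotient.mk P' q)
          = (Ideal.Quotient.mk P' q) ^ a * ((Ideal.Quotient.mk P' q) ^ (n + 1)) ^ b
            - ((Ideal.Quotient.mk P' q) ^ (a + (n + 1) * b) * Ideal.Quotient.mk P' z)
              * Ideal.Quotient.mk P' q := by
            rw [pow_add, pow_mul]
            ring
        _ = 0 := by rw [hmkeq]; ring
    haveI : IsDomain (D ⧸ P') := Ideal.Quotient.isDomain P'
    have hqbar : Ideal.Quotient.mk P' q ≠ 0 := by
      rw [Ne, Ideal.Quotient.eq_zero_iff_mem]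
      exact hqP'
    have h1z : (1 : D ⧸ P') - Ideal.Quotient.mk P' z * Ideal.Quotient.mk P' q = 0 := by
      rcases mul_eq_zero.mp hfactor with h | h
      · exact absurd h (pow_ne_zero _ hqbar)
      · exact h
    have : 1 - z * q ∈ P' := by
      rw [← Ideal.Quotient.eq_zero_iff_mem]
      rw [map_sub, map_one, map_mul]
      exact h1z
    have hone : (1 : D) ∈ Q := by
      have h1 : 1 - z * q ∈ Q := hP'Q this
      have h2 : z * q ∈ Q := Q.mul_mem_left z (hpQ.le hqp)
      have := Q.add_mem h1 h2
      simpa using this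
    exact hQ.ne_top (Q.eq_top_iff_one.mpr hone)
  -- the image of q in S is not a unit
  have hqS : algebraMap D K q ∈ S := S.algebraMap_mem q
  have hnonunit : ¬ IsUnit (⟨algebraMap D K q, hqS⟩ : S.toSubring) := by
    intro h
    obtain ⟨y, hy⟩ := isUnit_iff_exists_inv.mp h
    have hKy : (algebraMap D K q) * (y : K) = 1 := by
      have h' := congrArg (Subtype.val) hy
      simpa using h'
    exact hqinvS ((eq_inv_of_mul_eq_one_right hKy) ▸ y.2)
  obtain ⟨M, hMmax, hMle⟩ := Ideal.exists_le_maximal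
    (Ideal.span {(⟨algebraMap D K q, hqS⟩ : S.toSubring)})
    (fun h => hnonunit (Ideal.span_singleton_eq_top.mp h))
  have hqM : (⟨algebraMap D K q, hqS⟩ : S.toSubring) ∈ M :=
    hMle (Ideal.subset_span rfl)
  haveI := hMmax.isPrime
  set A : LocalSubring K := LocalSubring.ofPrime S.toSubring M with hA
  obtain ⟨V, hV⟩ := A.exists_le_valuationSubring
  obtain ⟨hle, hloc⟩ := hV
  have hSV : ∀ y : K, y ∈ S → y ∈ V := fun y hy =>
    hle (LocalSubring.le_ofPrime S.toSubring M hy)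
  have hqA : ¬ IsUnit (algebraMap S.toSubring A.toSubring
      (⟨algebraMap D K q, hqS⟩ : S.toSubring)) := by
    rw [IsLocalization.AtPrime.isUnit_to_map_iff A.toSubring M]
    intro hcompl
    exact hcompl hqM
  have hqV : algebraMap D K q ∈ V := hSV _ hqS
  have hqinvV : (algebraMap D K q)⁻¹ ∉ V := by
    intro hmem
    apply hqA
    apply hloc.map_nonunit
    apply isUnit_iff_exists_inv.mpr
    refine ⟨⟨(algebraMap D K q)⁻¹, hmem⟩, ?_⟩
    ext
    show (algebraMap D K q) * (algebraMap D K q)⁻¹ = 1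
    exact mul_inv_cancel₀ hqK
  refine ⟨V, fun d => hSV _ (S.algebraMap_mem d), hSV _ (Algebra.subset_adjoin (by simp)), ?_⟩
  intro i hi1 hin hiV
  -- q^i/t * u⁻¹ = (q^(n+1-i))⁻¹
  have huinv : u⁻¹ ∈ V := hSV _ (Algebra.subset_adjoin (by simp))
  set k : ℕ := n + 1 - i with hk
  have hk1 : 1 ≤ k := by omega
  have hik : i + k = n + 1 := by omega
  have hprod : ((algebraMap D K q) ^ i * (algebraMap D K t)⁻¹) * u⁻¹
      = ((algebraMap D K q) ^ k)⁻¹ := by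
    rw [hu, ← hik, pow_add]
    field_simp
  have hmemk : ((algebraMap D K q) ^ k)⁻¹ ∈ V := by
    rw [← hprod]
    exact mul_mem hiV huinv
  -- but then (e q)⁻¹ ∈ V, contradiction
  apply hqinvV
  have : (algebraMap D K q)⁻¹ = (algebraMap D K q) ^ (k - 1) * ((algebraMap D K q) ^ k)⁻¹ := by
    have hkk : k = (k - 1) + 1 := by omega
    rw [hkk, pow_succ]
    field_simp
    rw [Nat.add_sub_cancel]
  rw [this]
  exact mul_mem (pow_mem hqV _) hmemk

end Aux

theorem stmt14 (D K : Type*) [CommRing D] [IsDomain D] [Field K] [Algebra D K]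
    [IsFractionRing D K] (hKrull : IsKrullDomain D K) (hdim : 1 < ringKrullDim D) :
    ¬ TopologicalSpace.NoetherianSpace (zarSet D K) := by
  classical
  intro hNoeth
  -- extract a chain of primes of length 2
  obtain ⟨c, hc⟩ : ∃ c : LTSeries (PrimeSpectrum D), 2 ≤ c.length := by
    by_contra hall
    push_neg at hall
    have : ringKrullDim D ≤ 1 := by
      rw [ringKrullDim, Order.krullDim]
      apply iSup_le
      intro c
      have hle : c.length ≤ 1 := by have := hall c; omega
      calc (c.length : WithBot ℕ∞) ≤ ((1 : ℕ) : WithBot ℕ∞) := by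
            exact_mod_cast Nat.cast_le.mpr hle
        _ = 1 := by norm_cast
    exact absurd hdim (not_lt.mpr this)
  set x0 : PrimeSpectrum D := c ⟨0, by omega⟩ with hx0
  set x1 : PrimeSpectrum D := c ⟨1, by omega⟩ with hx1
  set x2 : PrimeSpectrum D := c ⟨2, by omega⟩ with hx2
  have h01 : x0 < x1 := c.strictMono (by simp [Fin.lt_def])
  have h12 : x1 < x2 := c.strictMono (by simp [Fin.lt_def])
  set p : Ideal D := x1.asIdeal with hp'
  set Q : Ideal D := x2.asIdeal with hQ'
  have hp : p.IsPrime := x1.isPrime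
  have hQ : Q.IsPrime := x2.isPrime
  have hpQ : p < Q := by
    rw [hp', hQ', PrimeSpectrum.asIdeal_lt_asIdeal]
    exact h12
  have hpbot : p ≠ ⊥ := by
    intro hbot
    have : x0.asIdeal < p := by
      rw [PrimeSpectrum.asIdeal_lt_asIdeal]; exact h01
    rw [hbot] at this
    exact absurd this (by simp)
  -- choose q and t
  obtain ⟨q, hqp, hq0⟩ := Submodule.exists_mem_ne_zero_of_ne_bot hpbot
  have hFq : {P : Ideal D | IsHeightOnePrime P ∧ q ∈ P}.Finite := hKrull.2.2 q hq0
  obtain ⟨t, htQ, htnot⟩ : ∃ t : D, t ∈ Q ∧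
      t ∉ p ∧ ∀ P : Ideal D, IsHeightOnePrime P → q ∈ P → t ∉ P := by
    set Fs : Finset (Ideal D) := insert p hFq.toFinset with hFs
    have hnotsub : ¬ ((Q : Set D) ⊆ ⋃ P ∈ (↑Fs : Set (Ideal D)), (P : Set D)) := by
      intro hsub
      rw [Ideal.subset_union_prime p p (fun P hP _ _ => ?hprime)] at hsub
      case hprime =>
        rcases Finset.mem_insert.mp hP with rfl | hP
        · exact hp
        · exact ((hFq.mem_toFinset.mp hP).1).1
      obtain ⟨P, hPFs, hQP⟩ := hsub
      rcases Finset.mem_insert.mp hPFs with rfl | hPF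
      · exact absurd (lt_of_lt_of_le hpQ hQP) (lt_irrefl _)
      · obtain ⟨hht, _⟩ := hFq.mem_toFinset.mp hPF
        have : p = ⊥ := hht.2.2 p hp (lt_of_lt_of_le hpQ hQP)
        exact hpbot this
    obtain ⟨t, htQ, htU⟩ := Set.not_subset.mp hnotsub
    refine ⟨t, htQ, ?_, ?_⟩
    · intro htp
      exact htU (Set.mem_biUnion (Finset.mem_coe.mpr (Finset.mem_insert_self p _)) htp)
    · intro P hP hqP htP
      apply htU
      exact Set.mem_biUnion
        (Finset.mem_coe.mpr (Finset.mem_insert_of_mem (hFq.mem_toFinset.mpr ⟨hP, hqP⟩))) htP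
  obtain ⟨htp, htF⟩ := htnot
  -- the elements y i = q^i / t and the corresponding open sets
  set y : ℕ → K := fun i => (algebraMap D K q) ^ i * (algebraMap D K t)⁻¹ with hy
  have hopen : ∀ x : K, IsOpen {V : ValuationSubring K | x ∈ V} := fun x =>
    TopologicalSpace.GenerateOpen.basic _ ⟨x, rfl⟩
  set W : ℕ → Set (ValuationSubring K) :=
    fun n => ⋃ i ∈ Finset.Icc 1 n, {V : ValuationSubring K | y i ∈ V} with hW
  have hWopen : ∀ n, IsOpen (W n) := fun n => isOpen_biUnion (fun i _ => hopen (y i))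
  set U : ℕ → TopologicalSpace.Opens (zarSet D K) :=
    fun n => ⟨Subtype.val ⁻¹' W n, (hWopen n).preimage continuous_subtype_val⟩ with hU
  have hmono : Monotone U := by
    intro m n hmn V hV
    obtain ⟨s', hs', hVs⟩ := Set.mem_iUnion₂.mp hV
    exact Set.mem_iUnion₂.mpr ⟨s', Finset.mem_Icc.mpr
      ⟨(Finset.mem_Icc.mp hs').1, le_trans (Finset.mem_Icc.mp hs').2 hmn⟩, hVs⟩
  obtain ⟨n, hn⟩ := wellFoundedGT_iff_monotone_chain_condition.mp hNoeth ⟨U, hmono⟩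
  -- the witness valuation ring for this n
  obtain ⟨V, hVD, hVin, hVout⟩ :=
    exists_witness hKrull hp hQ hpQ q t hqp hq0 htQ htp htF n
  have hVzar : V ∈ zarSet D K := hVD
  have hmem1 : (⟨V, hVzar⟩ : zarSet D K) ∈ U (n + 1) := by
    apply Set.mem_preimage.mpr
    exact Set.mem_iUnion₂.mpr ⟨n + 1, Finset.mem_Icc.mpr ⟨by omega, le_refl _⟩, hVin⟩
  have hmem2 : (⟨V, hVzar⟩ : zarSet D K) ∉ U n := by
    intro hmem
    obtain ⟨i, hi, hVi⟩ := Set.mem_iUnion₂.mp (Set.mem_preimage.mp hmem)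
    obtain ⟨hi1, hi2⟩ := Finset.mem_Icc.mp hi
    exact hVout i hi1 hi2 hVi
  have := hn (n + 1) (Nat.le_succ n)
  have : (U : ℕ → TopologicalSpace.Opens (zarSet D K)) n = U (n + 1) := this
  rw [← this] at hmem1
  exact hmem2 hmem1
end

section
/- Let D be a Prüfer domain whose prime spectrum is a Noetherian topological space. Then the Zariski space Zar(D) is a Noetherian topological space; indeed, the center map gamma : Zar(D) -> Spec(D), V ↦ m_V ∩ D, is a homeomorphism. -/
section Aux
variable {D K : Type*} [CommRing D] [IsDomain D] [Field K] [Algebra D K] [IsFractionRing D K]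

lemma isUnit_subring_iff {S : Type*} [SetLike S K] [SubringClass S K] {R : S} {x : K}
    (hx : x ∈ R) : IsUnit (⟨x, hx⟩ : R) ↔ x ≠ 0 ∧ x⁻¹ ∈ R := by
  constructor
  · rintro ⟨u, hu⟩
    have h1 : ((u * u⁻¹ : Rˣ) : R) = 1 := by rw [mul_inv_cancel]; rfl
    have h2 : ((u : R) : K) * (((u⁻¹ : Rˣ) : R) : K) = 1 := by
      rw [← MulMemClass.coe_mul]; exact_mod_cast congrArg (Subtype.val) h1
    rw [hu] at h2
    have hx0 : x ≠ 0 := by rintro rfl; simp at h2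
    refine ⟨hx0, ?_⟩
    have : (((u⁻¹ : Rˣ) : R) : K) = x⁻¹ := by
      field_simp at h2 ⊢
      linear_combination h2
    rw [← this]; exact SetLike.coe_mem _
  · rintro ⟨hx0, hinv⟩
    exact IsUnit.of_mul_eq_one ⟨x⁻¹, hinv⟩ (Subtype.ext (by simp [mul_inv_cancel₀ hx0]))

lemma mem_locAt {P : Ideal D} {hP : P.IsPrime} {x : K} :
    x ∈ locAt D K P hP ↔ ∃ a s : D, s ∉ P ∧ x * algebraMap D K s = algebraMap D K a := by
  show x ∈ Localization.subalgebra K _ _ ↔ _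
  rw [Localization.subalgebra, ← SetLike.mem_coe, Subalgebra.coe_copy, Set.mem_setOf_eq]
  constructor
  · rintro ⟨a, s, hs, rfl⟩
    exact ⟨a, s, hs, IsLocalization.mk'_spec K a ⟨s, _⟩⟩
  · rintro ⟨a, s, hs, h⟩
    exact ⟨a, s, hs, IsLocalization.eq_mk'_iff_mul_eq.mpr h⟩

end Aux
set_option linter.unusedSectionVars false
section Aux2
variable {D K : Type*} [CommRing D] [IsDomain D] [Field K] [Algebra D K] [IsFractionRing D K]

noncomputable def gammaFun (V : zarSet D K) : PrimeSpectrum D :=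
  ⟨(IsLocalRing.maximalIdeal (V : ValuationSubring K)).comap
      ((algebraMap D K).codRestrict (V : ValuationSubring K) V.2), inferInstance⟩

lemma mem_gammaFun {V : zarSet D K} {d : D} :
    d ∈ (gammaFun V).asIdeal ↔
      ¬(algebraMap D K d ≠ 0 ∧ (algebraMap D K d)⁻¹ ∈ (V : ValuationSubring K)) := by
  rw [gammaFun]
  rw [show ((⟨Ideal.comap _ _, inferInstance⟩ : PrimeSpectrum D).asIdeal) = _ from rfl,
    Ideal.mem_comap]
  rw [IsLocalRing.mem_maximalIdeal, mem_nonunits_iff]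
  exact not_congr (isUnit_subring_iff (V.2 d))

noncomputable def deltaFun (hpruf : ∀ (P : Ideal D) (hP : P.IsPrime) (x : K),
      x ∈ locAt D K P hP ∨ x⁻¹ ∈ locAt D K P hP) (P : PrimeSpectrum D) : zarSet D K :=
  ⟨{ toSubring := (locAt D K P.asIdeal P.2).toSubring
     mem_or_inv_mem' := fun x => hpruf P.asIdeal P.2 x },
   fun d => Subalgebra.algebraMap_mem _ d⟩

lemma mem_deltaFun {hpruf : ∀ (P : Ideal D) (hP : P.IsPrime) (x : K),
      x ∈ locAt D K P hP ∨ x⁻¹ ∈ locAt D K P hP} {P : PrimeSpectrum D} {x : K} :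
    x ∈ (deltaFun hpruf P : ValuationSubring K) ↔ x ∈ locAt D K P.asIdeal P.2 := Iff.rfl

end Aux2
section Aux3
variable {D K : Type*} [CommRing D] [IsDomain D] [Field K] [Algebra D K] [IsFractionRing D K]
variable (hpruf : ∀ (P : Ideal D) (hP : P.IsPrime) (x : K),
      x ∈ locAt D K P hP ∨ x⁻¹ ∈ locAt D K P hP)

include hpruf in
lemma gamma_delta (P : PrimeSpectrum D) : gammaFun (deltaFun hpruf P) = P := by
  ext d
  rw [mem_gammaFun]
  constructor
  · -- ¬(≠0 ∧ inv ∈ locAt) → d ∈ P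
    intro h
    by_contra hd
    apply h
    have hd0 : d ≠ 0 := fun h0 => hd (h0 ▸ P.asIdeal.zero_mem)
    have hmd : algebraMap D K d ≠ 0 := fun h0 => hd0 (IsFractionRing.injective D K (by simpa using h0))
    refine ⟨hmd, ?_⟩
    rw [mem_deltaFun, mem_locAt]
    exact ⟨1, d, hd, by rw [inv_mul_cancel₀ hmd, map_one]⟩
  · -- d ∈ P → ¬(...)
    rintro hd ⟨hmd, hinv⟩
    rw [mem_deltaFun, mem_locAt] at hinv
    obtain ⟨a, s, hs, heq⟩ := hinv
    -- (d̄)⁻¹ * s̄ = ā  ⇒  s̄ = d̄ * ā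
    have : algebraMap D K s = algebraMap D K (d * a) := by
      rw [map_mul]
      field_simp at heq
      linear_combination heq
    have hsda : s = d * a := IsFractionRing.injective D K this
    exact hs (hsda ▸ P.asIdeal.mul_mem_right a hd)

lemma locAt_gamma_le (V : zarSet D K) :
    ∀ x : K, x ∈ locAt D K (gammaFun V).asIdeal (gammaFun V).2 → x ∈ (V : ValuationSubring K) := by
  intro x hx
  rw [mem_locAt] at hx
  obtain ⟨a, s, hs, heq⟩ := hx
  rw [mem_gammaFun, not_not] at hs
  obtain ⟨hs0, hsinv⟩ := hs
  have : x = algebraMap D K a * (algebraMap D K s)⁻¹ := by rw [← heq]; field_simp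
  rw [this]
  exact mul_mem (V.2 a) hsinv

include hpruf in
lemma le_locAt_gamma (V : zarSet D K) :
    ∀ x : K, x ∈ (V : ValuationSubring K) → x ∈ locAt D K (gammaFun V).asIdeal (gammaFun V).2 := by
  intro x hxV
  by_contra hx
  rcases hpruf (gammaFun V).asIdeal (gammaFun V).2 x with h | h
  · exact hx h
  rw [mem_locAt] at h
  obtain ⟨a, s, hs, heq⟩ := h
  have hx0 : x ≠ 0 := by
    rintro rfl
    exact hx ((locAt D K _ _).zero_mem)
  rw [mem_gammaFun, not_not] at hs
  obtain ⟨hs0, hsinv⟩ := hs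
  have ha : a ∈ (gammaFun V).asIdeal := by
    by_contra haP
    rw [mem_gammaFun, not_not] at haP
    obtain ⟨ha0, hainv⟩ := haP
    apply hx
    rw [mem_locAt]
    refine ⟨s, a, ?_, ?_⟩
    · intro haP'
      rw [mem_gammaFun] at haP'
      exact haP' ⟨ha0, hainv⟩
    · rw [← heq]
      field_simp
  -- but ā = x⁻¹ s̄ is a unit of V : contradiction
  rw [mem_gammaFun] at ha
  apply ha
  have ha0 : algebraMap D K a ≠ 0 := by
    rw [← heq]
    exact mul_ne_zero (inv_ne_zero hx0) hs0
  refine ⟨ha0, ?_⟩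
  have : (algebraMap D K a)⁻¹ = x * (algebraMap D K s)⁻¹ := by
    rw [← heq]
    field_simp
  rw [this]
  exact mul_mem hxV hsinv

include hpruf in
lemma delta_gamma (V : zarSet D K) : deltaFun hpruf (gammaFun V) = V := by
  apply Subtype.ext
  apply SetLike.ext
  intro x
  rw [show (x ∈ (deltaFun hpruf (gammaFun V) : zarSet D K).1) ↔
      x ∈ locAt D K (gammaFun V).asIdeal (gammaFun V).2 from Iff.rfl]
  exact ⟨locAt_gamma_le V x, le_locAt_gamma hpruf V x⟩

end Aux3
section Aux4
variable {D K : Type*} [CommRing D] [IsDomain D] [Field K] [Algebra D K] [IsFractionRing D K]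

lemma continuous_gammaFun : Continuous (gammaFun : zarSet D K → PrimeSpectrum D) := by
  rw [PrimeSpectrum.isTopologicalBasis_basic_opens.continuous_iff]
  rintro s ⟨f, rfl⟩
  by_cases hf : f = 0
  · subst hf
    convert isOpen_empty
    ext V
    simp only [Set.mem_preimage, SetLike.mem_coe, Set.mem_empty_iff_false, iff_false,
      PrimeSpectrum.basicOpen_zero]
    exact fun h => h
  · have hne : algebraMap D K f ≠ 0 := fun h0 =>
      hf (IsFractionRing.injective D K (by simpa using h0))
    have heq : (gammaFun ⁻¹' ↑(PrimeSpectrum.basicOpen f) : Set (zarSet D K)) =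
        Subtype.val ⁻¹' {W : ValuationSubring K | (algebraMap D K f)⁻¹ ∈ W} := by
      ext V
      simp only [Set.mem_preimage, Set.mem_setOf_eq]
      rw [show (gammaFun V ∈ (PrimeSpectrum.basicOpen f : Set (PrimeSpectrum D))) ↔
          f ∉ (gammaFun V).asIdeal from Iff.rfl]
      rw [mem_gammaFun, not_not]
      exact ⟨fun h => h.2, fun h => ⟨hne, h⟩⟩
    rw [heq]
    have hop : IsOpen {W : ValuationSubring K | (algebraMap D K f)⁻¹ ∈ W} :=
      TopologicalSpace.isOpen_generateFrom_of_mem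
        (g := {U | ∃ x : K, U = {V : ValuationSubring K | x ∈ V}})
        ⟨(algebraMap D K f)⁻¹, rfl⟩
    exact hop.preimage continuous_subtype_val

lemma continuous_deltaFun (hpruf : ∀ (P : Ideal D) (hP : P.IsPrime) (x : K),
      x ∈ locAt D K P hP ∨ x⁻¹ ∈ locAt D K P hP) :
    Continuous (deltaFun hpruf : PrimeSpectrum D → zarSet D K) := by
  apply Continuous.subtype_mk
  apply continuous_generateFrom_iff.mpr
  rintro s ⟨x, rfl⟩
  suffices h : IsOpen ((fun P => ((deltaFun hpruf P : ValuationSubring K))) ⁻¹' {V | x ∈ V}) by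
    exact h
  have heq : ((fun P => ((deltaFun hpruf P : ValuationSubring K))) ⁻¹' {V | x ∈ V}) =
      ⋃ p : {p : D × D // x * algebraMap D K p.2 = algebraMap D K p.1},
        (PrimeSpectrum.basicOpen p.1.2 : Set (PrimeSpectrum D)) := by
    ext P
    simp only [Set.mem_preimage, Set.mem_setOf_eq]
    rw [mem_deltaFun, mem_locAt, Set.mem_iUnion]
    constructor
    · rintro ⟨a, s, hs, h⟩
      exact ⟨⟨(a, s), h⟩, hs⟩
    · rintro ⟨⟨⟨a, s⟩, h2⟩, hmem⟩
      exact ⟨a, s, hmem, h2⟩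
  rw [heq]
  exact isOpen_iUnion fun p => (PrimeSpectrum.basicOpen p.1.2).isOpen

end Aux4


theorem stmt15 (D K : Type*) [CommRing D] [IsDomain D] [Field K] [Algebra D K]
    [IsFractionRing D K]
    -- `D` is a Prüfer domain: every localization at a prime is a valuation ring of `K`
    (hpruf : ∀ (P : Ideal D) (hP : P.IsPrime) (x : K),
      x ∈ locAt D K P hP ∨ x⁻¹ ∈ locAt D K P hP)
    (hnoeth : TopologicalSpace.NoetherianSpace (PrimeSpectrum D)) :
    TopologicalSpace.NoetherianSpace (zarSet D K) ∧
      ∃ h : zarSet D K ≃ₜ PrimeSpectrum D,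
        ∀ V : zarSet D K, (h V).asIdeal =
          (IsLocalRing.maximalIdeal (V : ValuationSubring K)).comap
            ((algebraMap D K).codRestrict (V : ValuationSubring K) V.2) := by
  let e : zarSet D K ≃ₜ PrimeSpectrum D :=
    { toFun := gammaFun
      invFun := deltaFun hpruf
      left_inv := delta_gamma hpruf
      right_inv := gamma_delta hpruf
      continuous_toFun := continuous_gammaFun
      continuous_invFun := continuous_deltaFun hpruf }
  exact ⟨(TopologicalSpace.noetherianSpace_iff_of_homeomorph e).mpr hnoeth, e, fun V => rfl⟩
end

section
/- Let D be an integral domain with fraction field K. The set of finitely generated D-subalgebras of K is dense in Over(D) (the space of all rings between D and K) with respect to the constructible topology. -/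
/-- The Zariski topology on the set of subrings of a field `K`: subbasic open sets are
the sets of subrings containing a given element of `K`. -/
instance overTopology (K : Type*) [Field K] : TopologicalSpace (Subring K) :=
  TopologicalSpace.generateFrom {U | ∃ x : K, U = {S : Subring K | x ∈ S}}

/-- The space `Over(D)` of overrings of `D`: subrings of `K` containing the image of `D`. -/
def overSet (D K : Type*) [CommRing D] [Field K] [Algebra D K] : Set (Subring K) :=
  {S | ∀ d : D, algebraMap D K d ∈ S}

/-- The constructible (patch) topology associated to a topology: the coarsest topology in
which the open and compact subsets of the original topology are clopen. -/
def patchTopology (X : Type*) [TopologicalSpace X] : TopologicalSpace X :=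
  TopologicalSpace.generateFrom
    ({U | IsOpen U ∧ IsCompact U} ∪ {U | IsOpen Uᶜ ∧ IsCompact Uᶜ})

/-- Every Zariski-open set of subrings of `K` is of finite type: around any of its points
there is a finite set of elements such that any subring containing them lies in the set. -/
lemma zariski_finite_type {K : Type*} [Field K] {U : Set (Subring K)} (hU : IsOpen U) :
    ∀ S ∈ U, ∃ s : Finset K, (∀ x ∈ s, x ∈ S) ∧
      ∀ T : Subring K, (∀ x ∈ s, x ∈ T) → T ∈ U := by
  induction hU with
  | basic V hV =>
    obtain ⟨x, rfl⟩ := hV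
    exact fun S hS => ⟨{x}, by simpa using hS, fun T hT => by simpa using hT x (by simp)⟩
  | univ => exact fun S _ => ⟨∅, by simp, by simp⟩
  | inter V W _ _ ihV ihW =>
    classical
    rintro S ⟨hSV, hSW⟩
    obtain ⟨s, hs, hs'⟩ := ihV S hSV
    obtain ⟨t, ht, ht'⟩ := ihW S hSW
    refine ⟨s ∪ t, ?_, fun T hT => ⟨hs' T fun x hx => hT x ?_, ht' T fun x hx => hT x ?_⟩⟩
    · intro x hx
      rcases Finset.mem_union.1 hx with h | h
      exacts [hs x h, ht x h]
    · exact Finset.mem_union.2 (Or.inl hx)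
    · exact Finset.mem_union.2 (Or.inr hx)
  | sUnion 𝒮 _ ih =>
    rintro S ⟨V, hV, hSV⟩
    obtain ⟨s, hs, hs'⟩ := ih V hV S hSV
    exact ⟨s, hs, fun T hT => ⟨V, hV, hs' T hT⟩⟩

theorem stmt17 (D K : Type*) [CommRing D] [IsDomain D] [Field K] [Algebra D K]
    [IsFractionRing D K] :
    @Dense (overSet D K) (patchTopology (overSet D K))
      {S : overSet D K | ∃ s : Finset K,
        (S : Subring K) = (Algebra.adjoin D (s : Set K)).toSubring} := by
  refine (@dense_iff_inter_open (overSet D K) (patchTopology (overSet D K)) _).2 ?_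
  rintro U hU ⟨S, hS⟩
  -- opens in the induced topology on `overSet D K` are of finite type
  have key : ∀ V : Set (overSet D K), IsOpen V → ∀ A ∈ V, ∃ s : Finset K,
      (∀ x ∈ s, x ∈ (A : Subring K)) ∧
      ∀ B : overSet D K, (∀ x ∈ s, x ∈ (B : Subring K)) → B ∈ V := by
    intro V hV A hA
    rw [isOpen_induced_iff] at hV
    obtain ⟨W, hW, rfl⟩ := hV
    obtain ⟨s, hs, hs'⟩ := zariski_finite_type hW _ hA
    exact ⟨s, hs, fun B hB => hs' _ hB⟩
  -- opens are upward-closed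
  have mono : ∀ V : Set (overSet D K), IsOpen V → ∀ A ∈ V, ∀ B : overSet D K,
      (A : Subring K) ≤ (B : Subring K) → B ∈ V := by
    intro V hV A hA B hAB
    obtain ⟨s, hs, hs'⟩ := key V hV A hA
    exact hs' B fun x hx => hAB (hs x hx)
  -- main induction on generation of the patch topology
  have main : ∀ V : Set (overSet D K),
      (patchTopology (overSet D K)).IsOpen V → ∀ A ∈ V, ∃ s : Finset K,
      (∀ x ∈ s, x ∈ (A : Subring K)) ∧
      ∀ B : overSet D K, (B : Subring K) ≤ (A : Subring K) →
        (∀ x ∈ s, x ∈ (B : Subring K)) → B ∈ V := by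
    intro V hV
    induction hV with
    | basic W hW =>
      rcases hW with ⟨hWopen, _⟩ | ⟨hWc, _⟩
      · intro A hA
        obtain ⟨s, hs, hs'⟩ := key W hWopen A hA
        exact ⟨s, hs, fun B _ hB => hs' B hB⟩
      · intro A hA
        refine ⟨∅, by simp, fun B hBA _ => ?_⟩
        by_contra hBW
        exact (mono Wᶜ hWc B hBW A hBA) hA
    | univ => exact fun A _ => ⟨∅, by simp, by simp⟩
    | inter V W _ _ ihV ihW =>
      classical
      rintro A ⟨hAV, hAW⟩
      obtain ⟨s, hs, hs'⟩ := ihV A hAV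
      obtain ⟨t, ht, ht'⟩ := ihW A hAW
      refine ⟨s ∪ t, ?_, fun B hBA hB =>
        ⟨hs' B hBA fun x hx => hB x (Finset.mem_union.2 (Or.inl hx)),
         ht' B hBA fun x hx => hB x (Finset.mem_union.2 (Or.inr hx))⟩⟩
      intro x hx
      rcases Finset.mem_union.1 hx with h | h
      exacts [hs x h, ht x h]
    | sUnion 𝒮 _ ih =>
      rintro A ⟨V, hV, hAV⟩
      obtain ⟨s, hs, hs'⟩ := ih V hV A hAV
      exact ⟨s, hs, fun B hBA hB => ⟨V, hV, hs' B hBA hB⟩⟩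
  obtain ⟨s, hs, hs'⟩ := main U hU S hS
  -- the finitely generated approximation
  refine ⟨⟨(Algebra.adjoin D (s : Set K)).toSubring, fun d => ?_⟩, ?_, ⟨s, rfl⟩⟩
  · exact Subalgebra.algebraMap_mem _ d
  · refine hs' _ ?_ ?_
    · show (Algebra.adjoin D (↑s : Set K)).toSubring ≤ (S : Subring K)
      rw [Algebra.adjoin_eq_ring_closure]
      refine Subring.closure_le.2 ?_
      rintro x (⟨d, rfl⟩ | hx)
      · exact S.2 d
      · exact hs x hx
    · intro x hx
      exact Algebra.subset_adjoin hx
end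

section
/- Let D be an integral domain with fraction field K and let X be a subset of Over(D) containing every finitely generated D-subalgebra of K. If X, with the subspace Zariski topology, is a spectral space, then X = Over(D). -/
/-- Every open set in the Zariski topology on `Subring K` is upward closed. -/
lemma overTopology_isOpen_upward {K : Type*} [Field K] {U : Set (Subring K)}
    (h : IsOpen U) : ∀ ⦃S S' : Subring K⦄, S ∈ U → S ≤ S' → S' ∈ U := by
  induction h with
  | basic V hV =>
      obtain ⟨x, rfl⟩ := hV
      intro S S' hS hle
      exact hle hS
  | univ => intro S S' _ _; trivial
  | inter V W _ _ ihV ihW =>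
      intro S S' hS hle
      exact ⟨ihV hS.1 hle, ihW hS.2 hle⟩
  | sUnion 𝒮 _ ih =>
      rintro S S' ⟨V, hV, hSV⟩ hle
      exact ⟨V, hV, ih V hV hSV hle⟩

/-- A set with a minimum whose every open neighborhood contains the set is compact. -/
lemma isCompact_of_min {Y : Type*} [TopologicalSpace Y] {s : Set Y} {m : Y}
    (hm : m ∈ s) (h : ∀ U : Set Y, IsOpen U → m ∈ U → s ⊆ U) : IsCompact s := by
  apply isCompact_of_finite_subcover
  intro ι U hU hcov
  obtain ⟨i, hi⟩ := Set.mem_iUnion.mp (hcov hm)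
  exact ⟨{i}, fun y hy => Set.mem_iUnion₂.mpr ⟨i, Finset.mem_singleton_self i,
    h (U i) (hU i) hi hy⟩⟩

lemma adjoin_toSubring_le {D K : Type*} [CommRing D] [Field K] [Algebra D K]
    {s : Set K} {S : Subring K} (hS : S ∈ overSet D K) (hs : s ⊆ S) :
    (Algebra.adjoin D s).toSubring ≤ S := by
  let S' : Subalgebra D K := { S.toSubsemiring with algebraMap_mem' := hS }
  intro z hz
  exact Algebra.adjoin_le (show s ⊆ (S' : Set K) from hs) hz

theorem stmt18 {D K : Type*} [CommRing D] [IsDomain D] [Field K] [Algebra D K]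
    [IsFractionRing D K] (X : Set (Subring K)) (hX : X ⊆ overSet D K)
    (hfg : ∀ s : Finset K, (Algebra.adjoin D (s : Set K)).toSubring ∈ X)
    -- `X`, with the subspace Zariski topology, is a spectral space:
    (hsp : ∃ (R : Type _) (_ : CommRing R), Nonempty (X ≃ₜ PrimeSpectrum R)) :
    X = overSet D K := by
  classical
  obtain ⟨R, _, ⟨e⟩⟩ := hsp
  apply Set.Subset.antisymm hX
  intro T hT
  -- the basic sets inside X
  set A : K → Set X := fun x => {S : X | x ∈ (S : Subring K)} with hA
  have hXfg : ∀ s : Finset K, ((Algebra.adjoin D (s : Set K)).toSubring : Subring K) ∈ X :=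
    hfg
  have hAopen : ∀ x : K, IsOpen (A x) := by
    intro x
    have : IsOpen {S : Subring K | x ∈ S} :=
      TopologicalSpace.isOpen_generateFrom_of_mem ⟨x, rfl⟩
    exact this.preimage continuous_subtype_val
  have hmin : ∀ (s : Finset K) (S : Subring K), S ∈ X → (↑s : Set K) ⊆ S →
      (Algebra.adjoin D ((s : Finset K) : Set K)).toSubring ≤ S := fun s S hSX hs =>
    adjoin_toSubring_le (hX hSX) hs
  have hAcomp : ∀ x : K, IsCompact (A x) := by
    intro x
    have hMX : ((Algebra.adjoin D (({x} : Finset K) : Set K)).toSubring : Subring K) ∈ X :=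
      hfg {x}
    refine isCompact_of_min (m := (⟨_, hMX⟩ : X)) ?_ ?_
    · show x ∈ (Algebra.adjoin D (({x} : Finset K) : Set K)).toSubring
      exact Algebra.subset_adjoin (by simp)
    · intro U hU hmU
      obtain ⟨V, hV, rfl⟩ := isOpen_induced_iff.mp hU
      rintro ⟨S, hSX⟩ hxS
      have hle : (Algebra.adjoin D (({x} : Finset K) : Set K)).toSubring ≤ S :=
        hmin {x} S hSX (by rw [Finset.coe_singleton, Set.singleton_subset_iff]; exact hxS)
      exact overTopology_isOpen_upward hV hmU hle
  -- push forward along the homeomorphism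
  set B : K → Set (PrimeSpectrum R) := fun x => e '' A x with hB
  have hBco : ∀ x : K, IsCompact (B x) ∧ IsOpen (B x) := fun x =>
    ⟨(hAcomp x).image e.continuous, e.isOpenMap _ (hAopen x)⟩
  -- each B x is a finite union of basic opens
  have hBfin : ∀ x : K, ∃ t : Finset R, (PrimeSpectrum.zeroLocus (t : Set R))ᶜ = B x :=
    fun x => PrimeSpectrum.isCompact_isOpen_iff.mp (hBco x)
  -- the family with the finite intersection property
  set 𝒜 : Set (Set (PrimeSpectrum R)) :=
    (fun x => B x) '' (T : Set K) ∪ (fun y => (B y)ᶜ) '' ((T : Set K))ᶜ with h𝒜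
  have hFIP : Filter.NeBot (Filter.generate 𝒜) := by
    rw [Filter.generate_neBot_iff]
    intro t hts htf
    -- choose witnesses for members coming from T
    have hw : ∀ C ∈ t, (∃ x, x ∈ (T : Set K) ∧ B x = C) ∨ ∃ y, y ∉ (T : Set K) ∧ (B y)ᶜ = C := by
      intro C hC
      rcases hts hC with ⟨x, hx, hxC⟩ | ⟨y, hy, hyC⟩
      · exact Or.inl ⟨x, hx, hxC⟩
      · exact Or.inr ⟨y, hy, hyC⟩
    choose f hf using fun C (hC : C ∈ t ∧ ∃ x, x ∈ (T : Set K) ∧ B x = C) => hC.2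
    -- the finite set of generators
    have ht1 : {C | C ∈ t ∧ ∃ x, x ∈ (T : Set K) ∧ B x = C}.Finite :=
      htf.subset fun C hC => hC.1
    set s : Set K := (fun C : {C // C ∈ t ∧ ∃ x, x ∈ (T : Set K) ∧ B x = C} => f C.1 C.2) ''
      Set.univ with hs
    have hsfin : s.Finite := by
      apply Set.Finite.image
      have : Finite {C // C ∈ t ∧ ∃ x, x ∈ (T : Set K) ∧ B x = C} := ht1
      exact Set.finite_univ
    set s₀ : Finset K := hsfin.toFinset with hs₀
    have hs₀T : (s₀ : Set K) ⊆ (T : Set K) := by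
      intro x hx
      rw [hs₀, Set.Finite.coe_toFinset] at hx
      obtain ⟨C, -, rfl⟩ := hx
      exact (hf C.1 C.2).1
    -- the candidate point
    have hMX := hfg s₀
    refine ⟨e ⟨_, hMX⟩, ?_⟩
    intro C hC
    rcases hw C hC with hC1 | ⟨y, hyT, rfl⟩
    · have hCmem : C ∈ t ∧ ∃ x, x ∈ (T : Set K) ∧ B x = C := ⟨hC, hC1⟩
      have hxs : f C hCmem ∈ s₀ := by
        rw [hs₀, Set.Finite.mem_toFinset, hs]
        exact ⟨⟨C, hCmem⟩, Set.mem_univ _, rfl⟩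
      have : (⟨_, hMX⟩ : X) ∈ A (f C hCmem) := by
        show f C hCmem ∈ (Algebra.adjoin D ((s₀ : Finset K) : Set K)).toSubring
        exact Algebra.subset_adjoin (Finset.mem_coe.mpr hxs)
      have h2 : e ⟨_, hMX⟩ ∈ B (f C hCmem) := Set.mem_image_of_mem e this
      rwa [(hf C hCmem).2] at h2
    · -- C = (B y)ᶜ with y ∉ T
      intro hmem
      obtain ⟨S, hSA, hSe⟩ := hmem
      have hSeq : S = ⟨_, hMX⟩ := e.injective hSe
      rw [hSeq] at hSA
      have hyM : y ∈ (Algebra.adjoin D ((s₀ : Finset K) : Set K)).toSubring := hSA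
      have : y ∈ T := adjoin_toSubring_le hT hs₀T hyM
      exact hyT this
  -- extend to an ultrafilter
  letI := hFIP
  set F : Ultrafilter (PrimeSpectrum R) := Ultrafilter.of (Filter.generate 𝒜) with hF
  have h𝒜F : ∀ C ∈ 𝒜, C ∈ F := fun C hC =>
    Ultrafilter.of_le (Filter.generate 𝒜) (Filter.GenerateSets.basic hC)
  -- the prime ideal
  have hbo_union : ∀ t : Finset R, (PrimeSpectrum.zeroLocus (t : Set R))ᶜ =
      ⋃ r ∈ t, (PrimeSpectrum.basicOpen r : Set (PrimeSpectrum R)) := by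
    intro t
    ext P
    simp [PrimeSpectrum.mem_zeroLocus, Set.subset_def, PrimeSpectrum.mem_basicOpen]
  set p : Ideal R :=
    { carrier := {r | (PrimeSpectrum.basicOpen r : Set (PrimeSpectrum R)) ∉ F}
      zero_mem' := by
        intro h
        have : (PrimeSpectrum.basicOpen (0 : R) : Set (PrimeSpectrum R)) = ∅ := by
          ext P; simp [PrimeSpectrum.mem_basicOpen]
        rw [this] at h
        exact Filter.empty_notMem (F : Filter (PrimeSpectrum R)) h
      add_mem' := by
        intro a b ha hb
        intro h
        have hsub : (PrimeSpectrum.basicOpen (a + b) : Set (PrimeSpectrum R)) ⊆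
            (PrimeSpectrum.basicOpen a : Set (PrimeSpectrum R)) ∪
            (PrimeSpectrum.basicOpen b : Set (PrimeSpectrum R)) := by
          intro Q hQ
          simp only [SetLike.mem_coe, PrimeSpectrum.mem_basicOpen] at hQ
          by_contra hc
          simp only [Set.mem_union, SetLike.mem_coe, PrimeSpectrum.mem_basicOpen,
            not_or, not_not] at hc
          exact hQ (Ideal.add_mem _ hc.1 hc.2)
        have hun := Filter.mem_of_superset h hsub
        rcases Ultrafilter.union_mem_iff.mp hun with h' | h'
        · exact ha h'
        · exact hb h'
      smul_mem' := by
        intro r a ha h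
        have : (PrimeSpectrum.basicOpen (r • a) : Set (PrimeSpectrum R)) ⊆
            (PrimeSpectrum.basicOpen a : Set (PrimeSpectrum R)) := by
          rw [smul_eq_mul, PrimeSpectrum.basicOpen_mul]
          exact fun P hP => hP.2
        exact ha (Filter.mem_of_superset h this) } with hp
  have hp_mem : ∀ r : R, r ∈ p ↔ (PrimeSpectrum.basicOpen r : Set (PrimeSpectrum R)) ∉ F :=
    fun r => Iff.rfl
  have hp_prime : p.IsPrime := by
    constructor
    · intro htop
      have h1 : (1 : R) ∈ p := htop ▸ Submodule.mem_top
      rw [hp_mem] at h1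
      apply h1
      have : (PrimeSpectrum.basicOpen (1 : R) : Set (PrimeSpectrum R)) = Set.univ := by
        ext P; simp [PrimeSpectrum.mem_basicOpen]
      rw [this]
      exact Filter.univ_mem
    · intro a b hab
      rw [hp_mem] at hab
      by_contra hc
      push_neg at hc
      rw [hp_mem, not_not] at hc
      obtain ⟨ha, hb⟩ := hc
      rw [hp_mem, not_not] at hb
      apply hab
      have : (PrimeSpectrum.basicOpen (a * b) : Set (PrimeSpectrum R)) =
          (PrimeSpectrum.basicOpen a : Set (PrimeSpectrum R)) ∩
          (PrimeSpectrum.basicOpen b : Set (PrimeSpectrum R)) := by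
        rw [PrimeSpectrum.basicOpen_mul]; rfl
      rw [this]
      exact Filter.inter_mem ha hb
  set P : PrimeSpectrum R := ⟨p, hp_prime⟩ with hP
  -- P lies in B x for x ∈ T, and outside B y for y ∉ T
  have hPin : ∀ x : K, x ∈ T → P ∈ B x := by
    intro x hx
    have hBxF : B x ∈ F := h𝒜F _ (Or.inl ⟨x, hx, rfl⟩)
    obtain ⟨t, ht⟩ := hBfin x
    rw [← ht, hbo_union] at hBxF
    obtain ⟨r, hrt, hrF⟩ := (Ultrafilter.finite_biUnion_mem_iff t.finite_toSet).mp hBxF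
    have hrp : r ∉ p := fun hrp => hrp hrF
    have : P ∈ (PrimeSpectrum.basicOpen r : Set (PrimeSpectrum R)) := by
      simpa [PrimeSpectrum.mem_basicOpen] using hrp
    rw [← ht, hbo_union]
    exact Set.mem_biUnion hrt this
  have hPout : ∀ y : K, y ∉ T → P ∉ B y := by
    intro y hy hPy
    have hByF : (B y)ᶜ ∈ F := h𝒜F _ (Or.inr ⟨y, hy, rfl⟩)
    have hBynF : B y ∉ F := (Ultrafilter.compl_mem_iff_notMem).mp hByF
    obtain ⟨t, ht⟩ := hBfin y
    rw [← ht, hbo_union] at hPy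
    obtain ⟨r, hrt, hrP⟩ := Set.mem_iUnion₂.mp hPy
    have : r ∉ p := by simpa [PrimeSpectrum.mem_basicOpen] using hrP
    have hrF : (PrimeSpectrum.basicOpen r : Set (PrimeSpectrum R)) ∈ F := not_not.mp this
    apply hBynF
    rw [← ht, hbo_union]
    exact Filter.mem_of_superset hrF (fun Q hQ => Set.mem_biUnion hrt hQ)
  -- pull back
  set S : X := e.symm P with hS
  have heS : e S = P := e.apply_symm_apply P
  have hmemS : ∀ x : K, x ∈ (S : Subring K) ↔ x ∈ T := by
    intro x
    constructor
    · intro hxS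
      by_contra hxT
      exact hPout x hxT (heS ▸ Set.mem_image_of_mem e hxS)
    · intro hxT
      obtain ⟨S', hS'A, hS'e⟩ := hPin x hxT
      have : S' = S := e.injective (by rw [hS'e, heS])
      rw [← this]
      exact hS'A
  have : (S : Subring K) = T := by
    ext x; exact hmemS x
  rw [← this]
  exact S.2
end
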